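/- arXiv:1110.5169 — 2 statements merged into one kernel-verified Lean document; each statement's English description precedes it below -/
import Mathlib

section
/- Let p, u ∈ ℝ³ \ {0} be non-proportional and let f ∈ P satisfy f(p) = f(u) = 0 and have vanishing coefficient of t² in the polynomial t ↦ f(p + t·u). Then f vanishes at every point of the plane spanned by p and u, and for any nonzero linear form l ∈ H₁ vanishing on span{p, u} there exists a quadratic form q ∈ H₂ with q ≥ 0 on ℝ³ such that f = l²·q. -/
open MvPolynomial

noncomputable section

/-- The space of ternary (3-variable) real polynomials. `H d` corresponds to the
homogeneous polynomials of degree `d` via the predicate `IsHomogeneous`. -/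
abbrev MvP : Type := MvPolynomial (Fin 3) ℝ

/-- The cone `P` of nonnegative ternary quartics. -/
def Pcone : Set MvP :=
  {f | f.IsHomogeneous 4 ∧ ∀ a : Fin 3 → ℝ, 0 ≤ eval a f}

/-- `F` is a face of the cone `P`. -/
def IsFace (F : Set MvP) : Prop :=
  F ⊆ Pcone ∧
  (∀ a ∈ F, ∀ b ∈ F, a + b ∈ F) ∧
  (∀ c : ℝ, 0 ≤ c → ∀ a ∈ F, c • a ∈ F) ∧
  (∀ a ∈ Pcone, ∀ b ∈ Pcone, a + b ∈ F → a ∈ F ∧ b ∈ F)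

/-- `J_F = {q ∈ H₂ : q² ∈ F}`. -/
def Jset (F : Set MvP) : Set MvP :=
  {q | q.IsHomogeneous 2 ∧ q ^ 2 ∈ F}

/-- The univariate polynomial `t ↦ f (p + t • v)`. -/
def lineP (p v : Fin 3 → ℝ) (f : MvP) : Polynomial ℝ :=
  MvPolynomial.aeval (fun i => Polynomial.C (p i) + Polynomial.C (v i) * Polynomial.X) f

/-- The face `F_p = {f ∈ P : f(p) = 0}`. -/
def Fp (p : Fin 3 → ℝ) : Set MvP := {f ∈ Pcone | eval p f = 0}

/-- The face `F_{(p,v)}`: members of `P` vanishing at `p` whose restriction to the line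
`t ↦ p + t v` has vanishing `t²`-coefficient. -/
def Fpv (p v : Fin 3 → ℝ) : Set MvP :=
  {f ∈ Pcone | eval p f = 0 ∧ (lineP p v f).coeff 2 = 0}

lemma aeval_eval (g : Fin 3 → ℝ) (f : MvP) : (MvPolynomial.aeval g) f = eval g f := by
  rw [← MvPolynomial.coe_aeval_eq_eval]; rfl

lemma lineP_eval (p v : Fin 3 → ℝ) (f : MvP) (t : ℝ) :
    (lineP p v f).eval t = eval (fun i => p i + v i * t) f := by
  have h := MvPolynomial.comp_aeval (R := ℝ) (φ := Polynomial.aeval t)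
    (f := fun i : Fin 3 => Polynomial.C (p i) + Polynomial.C (v i) * Polynomial.X)
  have h2 := congrArg (fun (g : MvP →ₐ[ℝ] ℝ) => g f) h
  simp only [AlgHom.coe_comp, Function.comp_apply] at h2
  rw [lineP, ← Polynomial.coe_aeval_eq_eval, ← aeval_eval]
  show (Polynomial.aeval t) _ = _
  rw [h2]
  have h4 : (fun i : Fin 3 => (Polynomial.aeval t) (Polynomial.C (p i) + Polynomial.C (v i) * Polynomial.X)) = fun i => p i + v i * t := by
    funext i; simp
  rw [h4]

lemma coeff_zero_of_nonneg (h : Polynomial ℝ) (hnn : ∀ t, 0 ≤ h.eval t) (h0 : h.eval 0 = 0) :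
    h.coeff 0 = 0 ∧ h.coeff 1 = 0 := by
  constructor
  · rwa [Polynomial.coeff_zero_eq_eval_zero]
  · have hmin : IsLocalMin (fun t => h.eval t) 0 := by
      apply Filter.Eventually.of_forall
      intro t
      show h.eval 0 ≤ h.eval t
      rw [h0]; exact hnn t
    have h1 := hmin.deriv_eq_zero
    rw [Polynomial.deriv] at h1
    rw [← Polynomial.coeff_zero_eq_eval_zero, Polynomial.coeff_derivative] at h1
    simpa using h1

lemma degree_of_mem_support {f : MvP} {n : ℕ} (hf : f.IsHomogeneous n) {d : Fin 3 →₀ ℕ}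
    (hd : d ∈ f.support) : Finsupp.degree d = n := by
  rw [Finsupp.degree_eq_weight_one]
  exact hf (MvPolynomial.mem_support_iff.mp hd)

lemma linfac_natDegree (a b : ℝ) : (Polynomial.C a + Polynomial.C b * Polynomial.X).natDegree ≤ 1 := by
  apply le_trans (Polynomial.natDegree_add_le _ _)
  simp only [Polynomial.natDegree_C]
  apply max_le (by norm_num)
  apply le_trans (Polynomial.natDegree_C_mul_le _ _)
  simp

lemma lineP_natDegree_le (p v : Fin 3 → ℝ) (f : MvP) {n : ℕ} (hf : f.IsHomogeneous n) :
    (lineP p v f).natDegree ≤ n := by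
  rw [lineP, aeval_def, eval₂_eq]
  apply Polynomial.natDegree_sum_le_of_forall_le
  intro d hd
  apply le_trans (Polynomial.natDegree_mul_le)
  rw [Polynomial.algebraMap_eq, Polynomial.natDegree_C, zero_add]
  apply le_trans (Polynomial.natDegree_prod_le _ _)
  rw [← degree_of_mem_support hf hd]
  unfold Finsupp.degree
  apply Finset.sum_le_sum
  intro i _
  calc ((Polynomial.C (p i) + Polynomial.C (v i) * Polynomial.X) ^ d i).natDegree
      ≤ d i * (Polynomial.C (p i) + Polynomial.C (v i) * Polynomial.X).natDegree :=
        Polynomial.natDegree_pow_le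
    _ ≤ d i * 1 := Nat.mul_le_mul_left _ (linfac_natDegree _ _)
    _ = d i := Nat.mul_one _

lemma coeff_prod_sum {ι : Type*} (s : Finset ι) (q : ι → Polynomial ℝ) (m : ι → ℕ)
    (h : ∀ i ∈ s, (q i).natDegree ≤ m i) :
    (∏ i ∈ s, q i).coeff (∑ i ∈ s, m i) = ∏ i ∈ s, (q i).coeff (m i) := by
  classical
  induction s using Finset.induction_on with
  | empty => simp
  | insert a s' hnotmem ih =>
    rw [Finset.prod_insert hnotmem, Finset.sum_insert hnotmem, Finset.prod_insert hnotmem]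
    rw [Polynomial.coeff_mul_add_eq_of_natDegree_le (h a (Finset.mem_insert_self a s'))]
    · rw [ih (fun i hi => h i (Finset.mem_insert_of_mem hi))]
    · apply le_trans (Polynomial.natDegree_prod_le _ _)
      exact Finset.sum_le_sum (fun i hi => h i (Finset.mem_insert_of_mem hi))

lemma lineP_coeff_top (p v : Fin 3 → ℝ) (f : MvP) {n : ℕ} (hf : f.IsHomogeneous n) :
    (lineP p v f).coeff n = eval v f := by
  rw [lineP, aeval_def, eval₂_eq, Polynomial.finset_sum_coeff, eval_eq]
  apply Finset.sum_congr rfl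
  intro d hd
  rw [Polynomial.algebraMap_eq, Polynomial.coeff_C_mul]
  congr 1
  have hsupp : d.support ⊆ Finset.univ := Finset.subset_univ _
  have hdeg : ∑ i ∈ d.support, d i = n := degree_of_mem_support hf hd
  rw [← hdeg]
  rw [coeff_prod_sum _ _ _ (fun i _ => le_trans Polynomial.natDegree_pow_le
      (by simpa using Nat.mul_le_mul_left (d i) (linfac_natDegree (p i) (v i))))]
  apply Finset.prod_congr rfl
  intro i _
  have := Polynomial.coeff_pow_of_natDegree_le (p := Polynomial.C (p i) + Polynomial.C (v i) * Polynomial.X)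
    (n := 1) (m := d i) (linfac_natDegree _ _)
  rw [mul_one] at this
  rw [this]
  congr 1
  simp

lemma eval_smul_homog {f : MvP} {n : ℕ} (hf : f.IsHomogeneous n) (c : ℝ) (x : Fin 3 → ℝ) :
    eval (c • x) f = c ^ n * eval x f := by
  rw [eval_eq, eval_eq, Finset.mul_sum]
  apply Finset.sum_congr rfl
  intro d hd
  have hdeg : ∑ i ∈ d.support, d i = n := degree_of_mem_support hf hd
  rw [← hdeg]
  simp only [Pi.smul_apply, smul_eq_mul, mul_pow]
  rw [Finset.prod_mul_distrib, Finset.prod_pow_eq_pow_sum]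
  ring

lemma quartic_kill (h : Polynomial ℝ) (hdeg : h.natDegree ≤ 4)
    (h0 : h.coeff 0 = 0) (h1 : h.coeff 1 = 0) (h2 : h.coeff 2 = 0) (h4 : h.coeff 4 = 0)
    (hnn : ∀ t, 0 ≤ h.eval t) : h = 0 := by
  have heval : ∀ t : ℝ, h.eval t = h.coeff 3 * t ^ 3 := by
    intro t
    rw [Polynomial.eval_eq_sum_range' (lt_of_le_of_lt hdeg (by norm_num : (4:ℕ) < 5))]
    rw [Finset.sum_range_succ, Finset.sum_range_succ, Finset.sum_range_succ,
      Finset.sum_range_succ, Finset.sum_range_succ]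
    simp [h0, h1, h2, h4]
  have hc3 : h.coeff 3 = 0 := by
    have hp := hnn 1; rw [heval 1] at hp
    have hm := hnn (-1); rw [heval (-1)] at hm
    nlinarith
  apply Polynomial.funext
  intro t
  rw [heval t, hc3, Polynomial.eval_zero, zero_mul]

lemma part1 (p u : Fin 3 → ℝ) (f : MvP) (hf : f ∈ Pcone) (hfp : eval p f = 0)
    (hfu : eval u f = 0) (ht2 : (lineP p u f).coeff 2 = 0) :
    ∀ a ∈ Submodule.span ℝ ({p, u} : Set (Fin 3 → ℝ)), eval a f = 0 := by
  obtain ⟨hhom, hnn⟩ := hf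
  set g := lineP p u f with hg
  have gnn : ∀ t, 0 ≤ g.eval t := by
    intro t; rw [hg, lineP_eval]; exact hnn _
  have g0 : g.eval 0 = 0 := by
    rw [hg, lineP_eval]
    simpa using hfp
  obtain ⟨gc0, gc1⟩ := coeff_zero_of_nonneg g gnn g0
  have gc4 : g.coeff 4 = 0 := by rw [hg, lineP_coeff_top p u f hhom]; exact hfu
  have gzero : g = 0 := quartic_kill g (lineP_natDegree_le p u f hhom) gc0 gc1 ht2 gc4 gnn
  have hline : ∀ t : ℝ, eval (fun i => p i + u i * t) f = 0 := by
    intro t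
    rw [← lineP_eval, ← hg, gzero, Polynomial.eval_zero]
  intro a ha
  obtain ⟨c, d, rfl⟩ := Submodule.mem_span_pair.mp ha
  by_cases hc : c = 0
  · subst hc
    have : (0:ℝ) • p + d • u = d • u := by simp
    rw [this, eval_smul_homog hhom, hfu, mul_zero]
  · have key : c • p + d • u = c • (fun i => p i + u i * (d / c)) := by
      funext i
      simp only [Pi.add_apply, Pi.smul_apply, smul_eq_mul]
      field_simp
    rw [key, eval_smul_homog hhom, hline, mul_zero]

lemma degree_one_single {m : Fin 3 →₀ ℕ} (hm : Finsupp.degree m = 1) :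
    ∃ i, m = Finsupp.single i 1 := by
  have hm0 : m ≠ 0 := by
    intro h; rw [h] at hm; simp at hm
  obtain ⟨i, hi⟩ : ∃ i, m i ≠ 0 := by
    by_contra hcon
    push_neg at hcon
    exact hm0 (Finsupp.ext fun j => hcon j)
  have hi1 : m i = 1 := le_antisymm (hm ▸ Finsupp.le_degree i m) (Nat.one_le_iff_ne_zero.mpr hi)
  refine ⟨i, Finsupp.ext fun j => ?_⟩
  rcases eq_or_ne j i with rfl | hji
  · simp [hi1]
  · rw [Finsupp.single_apply, if_neg (fun h => hji h.symm)]
    by_contra hj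
    have hjmem : j ∈ m.support := Finsupp.mem_support_iff.mpr hj
    have himem : i ∈ m.support := Finsupp.mem_support_iff.mpr hi
    have h2 : 2 ≤ Finsupp.degree m := by
      unfold Finsupp.degree
      have hsub : ({i, j} : Finset (Fin 3)) ⊆ m.support := by
        intro k hk
        simp only [Finset.mem_insert, Finset.mem_singleton] at hk
        rcases hk with rfl | rfl <;> assumption
      calc 2 ≤ m i + m j := by rw [hi1]; omega
        _ = ∑ k ∈ {i, j}, m k := by rw [Finset.sum_pair (Ne.symm hji)]
        _ ≤ ∑ k ∈ m.support, m k := Finset.sum_le_sum_of_subset hsub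
    omega

lemma degree_single_one (i : Fin 3) : Finsupp.degree (Finsupp.single i (1:ℕ)) = 1 := by
  rw [show Finsupp.degree (Finsupp.single i (1:ℕ)) = ∑ k ∈ (Finsupp.single i (1:ℕ)).support, Finsupp.single i 1 k from rfl]
  rw [Finsupp.support_single_ne_zero i one_ne_zero]
  simp

lemma hom1_rep (l : MvP) (hl : l.IsHomogeneous 1) :
    l = ∑ i : Fin 3, C (coeff (Finsupp.single i 1) l) * X i := by
  apply MvPolynomial.ext
  intro m
  rw [MvPolynomial.coeff_sum]
  simp only [coeff_C_mul, MvPolynomial.coeff_X']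
  by_cases hm : Finsupp.degree m = 1
  · obtain ⟨i, rfl⟩ := degree_one_single hm
    rw [Finset.sum_eq_single i]
    · simp
    · intro j _ hji
      rw [if_neg, mul_zero]
      intro hc
      exact hji (Finsupp.single_left_injective one_ne_zero hc)
    · intro h; exact absurd (Finset.mem_univ i) h
  · rw [hl.coeff_eq_zero hm, Finset.sum_eq_zero]
    intro i _
    rw [if_neg, mul_zero]
    intro hc
    rw [← hc] at hm
    exact hm (degree_single_one i)

lemma coeff_zero_of_nonneg' (h : Polynomial ℝ) (hnn : ∀ t, 0 ≤ h.eval t) (h0 : h.eval 0 = 0) :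
    h.coeff 1 = 0 := by
  have hmin : IsLocalMin (fun t => h.eval t) 0 := by
    apply Filter.Eventually.of_forall
    intro t
    show h.eval 0 ≤ h.eval t
    rw [h0]; exact hnn t
  have h1 := hmin.deriv_eq_zero
  rw [Polynomial.deriv] at h1
  rw [← Polynomial.coeff_zero_eq_eval_zero, Polynomial.coeff_derivative] at h1
  simpa using h1

lemma div_X0 (F : MvPolynomial (Fin 3) ℝ) (h : ∀ c : Fin 3 → ℝ, c 0 = 0 → eval c F = 0) :
    ∃ G, F = X 0 * G := by
  set P := finSuccEquiv ℝ 2 F with hP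
  have hc0 : P.coeff 0 = 0 := by
    apply MvPolynomial.funext (q := 0)
    intro s
    rw [map_zero]
    have he := eval_eq_eval_mv_eval' s 0 F
    rw [h (Fin.cons 0 s) (by simp)] at he
    rw [← Polynomial.coeff_zero_eq_eval_zero, Polynomial.coeff_map] at he
    exact he.symm
  obtain ⟨P1, hP1⟩ := Polynomial.X_dvd_iff.mpr hc0
  refine ⟨(finSuccEquiv ℝ 2).symm P1, ?_⟩
  have : F = (finSuccEquiv ℝ 2).symm P := by rw [hP, AlgEquiv.symm_apply_apply]
  rw [this, hP1, map_mul]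
  congr 1
  rw [← MvPolynomial.finSuccEquiv_X_zero (R := ℝ) (n := 2), AlgEquiv.symm_apply_apply]

lemma div_sq (F : MvPolynomial (Fin 3) ℝ) (hnn : ∀ c, 0 ≤ eval c F)
    (h0 : ∀ c : Fin 3 → ℝ, c 0 = 0 → eval c F = 0) :
    ∃ Q, F = X 0 ^ 2 * Q ∧ ∀ c, 0 ≤ eval c Q := by
  obtain ⟨G, hG⟩ := div_X0 F h0
  have hG0 : ∀ c : Fin 3 → ℝ, c 0 = 0 → eval c G = 0 := by
    intro c hc
    set s := Fin.tail c with hs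
    set A := Polynomial.map (eval s) (finSuccEquiv ℝ 2 F) with hA
    set B := Polynomial.map (eval s) (finSuccEquiv ℝ 2 G) with hB
    have hAe : ∀ t, A.eval t = eval (Fin.cons t s) F := by
      intro t; rw [hA, ← eval_eq_eval_mv_eval']
    have hBe : ∀ t, B.eval t = eval (Fin.cons t s) G := by
      intro t; rw [hB, ← eval_eq_eval_mv_eval']
    have hAB : A = Polynomial.X * B := by
      rw [hA, hB, hG, map_mul, MvPolynomial.finSuccEquiv_X_zero, Polynomial.map_mul,
        Polynomial.map_X]
    have hAnn : ∀ t, 0 ≤ A.eval t := fun t => (hAe t) ▸ hnn _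
    have hA0 : A.eval 0 = 0 := by
      rw [hAe 0]; exact h0 _ (by simp)
    have hc1 : A.coeff 1 = 0 := coeff_zero_of_nonneg' A hAnn hA0
    rw [hAB, Polynomial.coeff_X_mul] at hc1
    rw [Polynomial.coeff_zero_eq_eval_zero, hBe 0] at hc1
    have : Fin.cons (0:ℝ) s = c := by rw [hs, ← hc, Fin.cons_self_tail]
    rwa [this] at hc1
  obtain ⟨Q, hQ⟩ := div_X0 G hG0
  have hFQ : F = X 0 ^ 2 * Q := by rw [hG, hQ]; ring
  refine ⟨Q, hFQ, ?_⟩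
  intro c
  by_cases hc : c 0 = 0
  · set s := Fin.tail c with hs
    set D := Polynomial.map (eval s) (finSuccEquiv ℝ 2 Q) with hD
    have hDe : ∀ t, D.eval t = eval (Fin.cons t s) Q := by
      intro t; rw [hD, ← eval_eq_eval_mv_eval']
    have hDnn : ∀ t : ℝ, t ≠ 0 → 0 ≤ D.eval t := by
      intro t ht
      rw [hDe t]
      have h1 := hnn (Fin.cons t s)
      rw [hFQ, map_mul, map_pow, eval_X] at h1
      have ht2 : (0:ℝ) < ((Fin.cons t s : Fin 3 → ℝ) 0) ^ 2 := by
        rw [Fin.cons_zero]; exact pow_two_pos_of_ne_zero ht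
      exact (mul_nonneg_iff_of_pos_left ht2).mp h1
    have htend : Filter.Tendsto (fun t => D.eval t) (nhdsWithin 0 {(0:ℝ)}ᶜ) (nhds (D.eval 0)) :=
      ((Polynomial.continuous D).continuousAt).continuousWithinAt
    have hev : ∀ᶠ t in nhdsWithin 0 {(0:ℝ)}ᶜ, 0 ≤ D.eval t :=
      eventually_nhdsWithin_of_forall (fun t ht => hDnn t ht)
    have hD0 : 0 ≤ D.eval 0 := ge_of_tendsto htend hev
    rw [hDe 0] at hD0
    have : Fin.cons (0:ℝ) s = c := by rw [hs, ← hc, Fin.cons_self_tail]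
    rwa [this] at hD0
  · have h1 := hnn c
    rw [hFQ, map_mul, map_pow, eval_X] at h1
    have ht2 : (0:ℝ) < (c 0) ^ 2 := pow_two_pos_of_ne_zero hc
    exact (mul_nonneg_iff_of_pos_left ht2).mp h1

lemma homog_factor {a b : MvPolynomial (Fin 3) ℝ} {m n : ℕ} (ha : a.IsHomogeneous m)
    (hane : a ≠ 0) (hab : (a * b).IsHomogeneous (m + n)) : b.IsHomogeneous n := by
  set N := b.totalDegree with hN
  have hsum : b = ∑ j ∈ Finset.range (N + 1), homogeneousComponent j b :=
    (sum_homogeneousComponent b).symm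
  have hk : ∀ k, k ≠ n → homogeneousComponent k b = 0 := by
    intro k hkn
    by_cases hkN : k < N + 1
    · by_contra hne
      have hcomp : ∀ j, (a * homogeneousComponent j b).IsHomogeneous (m + j) :=
        fun j => ha.mul (homogeneousComponent_isHomogeneous j b)
      have key : homogeneousComponent (m + k) (a * b) = a * homogeneousComponent k b := by
        conv_lhs => rw [hsum]
        rw [Finset.mul_sum, map_sum]
        rw [Finset.sum_eq_single_of_mem k (Finset.mem_range.mpr hkN)]
        · rw [homogeneousComponent_of_mem ((mem_homogeneousSubmodule _ _).mpr (hcomp k))]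
          rw [if_pos rfl]
        · intro j _ hj
          rw [homogeneousComponent_of_mem ((mem_homogeneousSubmodule _ _).mpr (hcomp j))]
          rw [if_neg (by omega)]
      rw [homogeneousComponent_of_mem ((mem_homogeneousSubmodule _ _).mpr hab)] at key
      rw [if_neg (by omega)] at key
      rcases mul_eq_zero.mp key.symm with h | h
      · exact hane h
      · exact hne h
    · exact homogeneousComponent_eq_zero k b (by omega)
  by_cases hn : n < N + 1
  · have hb : b = homogeneousComponent n b := by
      conv_lhs => rw [hsum]
      rw [Finset.sum_eq_single_of_mem n (Finset.mem_range.mpr hn)]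
      intro j _ hj
      exact hk j hj
    rw [hb]
    exact homogeneousComponent_isHomogeneous n b
  · have hb : b = 0 := by
      rw [hsum]
      apply Finset.sum_eq_zero
      intro j hj
      exact hk j (by simp at hj; omega)
    rw [hb]
    exact isHomogeneous_zero _ _ _

lemma eval_aeval (g : Fin 3 → MvP) (h : MvP) (c : Fin 3 → ℝ) :
    eval c (MvPolynomial.aeval g h) = eval (fun i => eval c (g i)) h := by
  have hc := MvPolynomial.comp_aeval (R := ℝ) (φ := MvPolynomial.aeval c) (f := g)
  have h2 := congrArg (fun (ψ : MvP →ₐ[ℝ] ℝ) => ψ h) hc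
  simp only [AlgHom.coe_comp, Function.comp_apply] at h2
  rw [← aeval_eval c (MvPolynomial.aeval g h), h2]
  rw [show (fun i => (MvPolynomial.aeval c) (g i)) = fun i => eval c (g i) from
    funext fun i => aeval_eval c (g i)]
  exact aeval_eval _ h


/-- if `f ∈ P` vanishes at non-proportional `p, u` and the `t²`-coefficient of
`t ↦ f(p + t u)` vanishes, then `f` vanishes on the plane spanned by `p` and `u`, and `f`
is `l²` times a nonnegative quadratic form for any nonzero linear form `l` vanishing on
that plane. -/
theorem stmt_9 (p u : Fin 3 → ℝ) (hp : p ≠ 0) (hu : u ≠ 0) (hpu : ∀ c : ℝ, u ≠ c • p)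
    (f : MvP) (hf : f ∈ Pcone) (hfp : eval p f = 0) (hfu : eval u f = 0)
    (ht2 : (lineP p u f).coeff 2 = 0) :
    (∀ a ∈ Submodule.span ℝ ({p, u} : Set (Fin 3 → ℝ)), eval a f = 0) ∧
    ∀ l : MvP, l.IsHomogeneous 1 → l ≠ 0 →
      (∀ a ∈ Submodule.span ℝ ({p, u} : Set (Fin 3 → ℝ)), eval a l = 0) →
      ∃ q : MvP, q.IsHomogeneous 2 ∧ (∀ x : Fin 3 → ℝ, 0 ≤ eval x q) ∧ f = l ^ 2 * q := by
  have hvanish := part1 p u f hf hfp hfu ht2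
  refine ⟨hvanish, ?_⟩
  intro l hl1 hlne hlv
  -- the linear functional attached to l
  set lam : (Fin 3 → ℝ) →ₗ[ℝ] ℝ :=
    ∑ i : Fin 3, coeff (Finsupp.single i 1) l • (LinearMap.proj i) with hlam
  have hlam_apply : ∀ x : Fin 3 → ℝ, lam x = ∑ i : Fin 3, coeff (Finsupp.single i 1) l * x i := by
    intro x
    rw [hlam, LinearMap.sum_apply]
    apply Finset.sum_congr rfl
    intro i _
    simp
  have heval_lam : ∀ x : Fin 3 → ℝ, eval x l = lam x := by
    intro x
    conv_lhs => rw [hom1_rep l hl1]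
    rw [map_sum, hlam_apply]
    apply Finset.sum_congr rfl
    intro i _
    simp
  have hlp : lam p = 0 := by
    rw [← heval_lam]; exact hlv p (Submodule.subset_span (by simp))
  have hlu : lam u = 0 := by
    rw [← heval_lam]; exact hlv u (Submodule.subset_span (by simp))
  have hker : ∀ z ∈ Submodule.span ℝ ({p, u} : Set (Fin 3 → ℝ)), lam z = 0 := by
    intro z hz
    obtain ⟨m, n, rfl⟩ := Submodule.mem_span_pair.mp hz
    rw [map_add, map_smul, map_smul, hlp, hlu]
    simp
  obtain ⟨x0, hx0⟩ : ∃ x, lam x ≠ 0 := by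
    by_contra hc
    push_neg at hc
    apply hlne
    apply MvPolynomial.funext (q := 0)
    intro x
    rw [map_zero, heval_lam, hc]
  set w : Fin 3 → ℝ := (lam x0)⁻¹ • x0 with hwdef
  have hw : lam w = 1 := by
    rw [hwdef, map_smul, smul_eq_mul, inv_mul_cancel₀ hx0]
  -- basis
  set v : Fin 3 → (Fin 3 → ℝ) := ![w, p, u] with hv
  have hindpu : LinearIndependent ℝ ![p, u] := by
    rw [linearIndependent_fin2]
    simp only [Matrix.cons_val_zero, Matrix.cons_val_one, Matrix.head_cons]
    refine ⟨hu, fun a ha => ?_⟩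
    have ha0 : a ≠ 0 := by rintro rfl; rw [zero_smul] at ha; exact hp ha.symm
    apply hpu a⁻¹
    rw [← ha, smul_smul, inv_mul_cancel₀ ha0, one_smul]
  have hrange : Set.range ![p, u] = ({p, u} : Set (Fin 3 → ℝ)) := by
    ext y
    constructor
    · rintro ⟨j, rfl⟩
      fin_cases j <;> simp
    · rintro (rfl | rfl)
      exacts [⟨0, rfl⟩, ⟨1, rfl⟩]
  have hind : LinearIndependent ℝ v := by
    rw [hv]
    rw [show (![w, p, u] : Fin 3 → (Fin 3 → ℝ)) = Fin.cons w ![p, u] from rfl]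
    rw [linearIndependent_fin_cons]
    refine ⟨hindpu, ?_⟩
    rw [hrange]
    intro hmem
    have := hker w hmem
    rw [hw] at this
    exact one_ne_zero this
  have hcard : Fintype.card (Fin 3) = Module.finrank ℝ (Fin 3 → ℝ) := by simp
  set b := basisOfLinearIndependentOfCardEqFinrank hind hcard with hbdef
  have hb : ⇑b = v := coe_basisOfLinearIndependentOfCardEqFinrank hind hcard
  have hcoordlam : ∀ x : Fin 3 → ℝ, b.repr x 0 = lam x := by
    have hext : (b.coord 0) = lam := by
      apply b.ext
      intro j
      rw [Module.Basis.coord_apply, Module.Basis.repr_self]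
      rw [congrFun hb j, hv]
      fin_cases j <;> simp [hw, hlp, hlu, Finsupp.single_apply]
    intro x
    rw [← hext, Module.Basis.coord_apply]
  -- substitution maps
  set φg : Fin 3 → MvP := fun i => ∑ j : Fin 3, C (v j i) * X j with hφg
  set ψg : Fin 3 → MvP := fun i => ∑ j : Fin 3, C (b.repr (Pi.single j 1) i) * X j with hψg
  have hφeval : ∀ (h : MvP) (c : Fin 3 → ℝ),
      eval c (MvPolynomial.aeval φg h) = eval (∑ j : Fin 3, c j • v j) h := by
    intro h c
    rw [eval_aeval]
    have harg : (fun i => eval c (φg i)) = ∑ j : Fin 3, c j • v j := by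
      funext i
      rw [hφg, map_sum, Finset.sum_apply]
      apply Finset.sum_congr rfl
      intro j _
      simp [mul_comm]
    rw [harg]
  have hrep : ∀ (x : Fin 3 → ℝ) (i : Fin 3),
      b.repr x i = ∑ j : Fin 3, b.repr (Pi.single j 1) i * x j := by
    intro x i
    have hx : x = ∑ j : Fin 3, x j • (Pi.single j 1 : Fin 3 → ℝ) := by
      funext k
      rw [Finset.sum_apply]
      simp [Pi.single_apply]
    conv_lhs => rw [hx]
    rw [map_sum, Finsupp.finset_sum_apply]
    apply Finset.sum_congr rfl
    intro j _
    rw [map_smul, Finsupp.smul_apply, smul_eq_mul, mul_comm]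
  have hψeval : ∀ (h : MvP) (x : Fin 3 → ℝ),
      eval x (MvPolynomial.aeval ψg h) = eval (fun i => b.repr x i) h := by
    intro h x
    rw [eval_aeval]
    have harg : (fun i => eval x (ψg i)) = fun i => b.repr x i := by
      funext i
      rw [hψg, map_sum, hrep x i]
      apply Finset.sum_congr rfl
      intro j _
      simp
    rw [harg]
  -- transformed polynomial
  set F := MvPolynomial.aeval φg f with hFdef
  have hF0 : ∀ c : Fin 3 → ℝ, c 0 = 0 → eval c F = 0 := by
    intro c hc
    rw [hFdef, hφeval]
    apply hvanish
    have hsum : ∑ j : Fin 3, c j • v j = c 1 • p + c 2 • u := by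
      rw [Fin.sum_univ_three]
      rw [show v 0 = w from rfl, show v 1 = p from rfl, show v 2 = u from rfl, hc, zero_smul,
        zero_add]
    rw [hsum]
    exact Submodule.mem_span_pair.mpr ⟨c 1, c 2, rfl⟩
  have hFnn : ∀ c : Fin 3 → ℝ, 0 ≤ eval c F := by
    intro c
    rw [hFdef, hφeval]
    exact hf.2 _
  obtain ⟨Q, hFQ, hQnn⟩ := div_sq F hFnn hF0
  set q := MvPolynomial.aeval ψg Q with hqdef
  have hid : ∀ h : MvP, MvPolynomial.aeval ψg (MvPolynomial.aeval φg h) = h := by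
    intro h
    apply MvPolynomial.funext
    intro x
    rw [hψeval, hφeval]
    have harg : (∑ j : Fin 3, b.repr x j • v j) = x := by
      rw [← hb]
      exact b.sum_repr x
    rw [harg]
  have hpsi_l : MvPolynomial.aeval ψg ((X 0 : MvP)) = l := by
    apply MvPolynomial.funext
    intro x
    rw [hψeval, eval_X, hcoordlam, heval_lam]
  have hfeq : f = l ^ 2 * q := by
    conv_lhs => rw [← hid f]
    rw [← hFdef, hFQ, map_mul, map_pow, hpsi_l, hqdef]
  have hqnn : ∀ x : Fin 3 → ℝ, 0 ≤ eval x q := by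
    intro x
    rw [hqdef, hψeval]
    exact hQnn _
  have hqhom : q.IsHomogeneous 2 := by
    apply homog_factor (a := l ^ 2) (m := 2) (n := 2) _ (pow_ne_zero 2 hlne)
    · show (l ^ 2 * q).IsHomogeneous 4
      rw [← hfeq]
      exact hf.1
    · have h2 := hl1.pow 2
      simpa using h2
  exact ⟨q, hqhom, hqnn, hfeq⟩
end
end

section
/- Let F_{T₁} := {f ∈ P : the coefficients of x⁴ and of x²z² in f are zero}. Then the linear span of F_{T₁} equals the 9-dimensional subspace of H₄ consisting of all forms whose coefficients of x⁴, x³y, x³z, x²z², x²yz and xz³ vanish, i.e. the span of the monomials x²y², xy³, xy²z, xyz², y⁴, y³z, y²z², yz³, z⁴. -/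
open MvPolynomial Finsupp
noncomputable section
/-- The face `F_{T₁}`: quartics in `P` whose coefficients of `x⁴` and `x²z²` vanish. -/
def FT1 : Set MvP :=
  {f ∈ Pcone | coeff (Finsupp.single (0 : Fin 3) 4) f = 0 ∧
    coeff (Finsupp.single (0 : Fin 3) 2 + Finsupp.single (2 : Fin 3) 2) f = 0}

def mm (i j k : ℕ) : Fin 3 →₀ ℕ := Finsupp.single 0 i + Finsupp.single 1 j + Finsupp.single 2 k
lemma mm_apply0 (i j k : ℕ) : mm i j k 0 = i := by simp [mm, Finsupp.single_apply]
lemma mm_apply1 (i j k : ℕ) : mm i j k 1 = j := by simp [mm, Finsupp.single_apply]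
lemma mm_apply2 (i j k : ℕ) : mm i j k 2 = k := by simp [mm, Finsupp.single_apply]
lemma mm_eq_iff {i j k i' j' k' : ℕ} : mm i j k = mm i' j' k' ↔ (i = i' ∧ j = j' ∧ k = k') := by
  constructor
  · intro h
    exact ⟨by simpa [mm_apply0] using DFunLike.congr_fun h 0,
      by simpa [mm_apply1] using DFunLike.congr_fun h 1,
      by simpa [mm_apply2] using DFunLike.congr_fun h 2⟩
  · rintro ⟨rfl, rfl, rfl⟩; rfl
lemma degree_eq (d : Fin 3 →₀ ℕ) : d.degree = d 0 + d 1 + d 2 := by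
  have : d.degree = ∑ i : Fin 3, d i :=
    Finset.sum_subset (Finset.subset_univ _) (fun x _ hx => by simpa using hx)
  rw [this, Fin.sum_univ_three]
lemma mm_degree (i j k : ℕ) : (mm i j k).degree = i + j + k := by
  rw [degree_eq, mm_apply0, mm_apply1, mm_apply2]
lemma self_eq_mm (d : Fin 3 →₀ ℕ) : d = mm (d 0) (d 1) (d 2) := by
  ext x; fin_cases x <;> simp [mm, Finsupp.single_apply]
lemma mm_add (i j k i' j' k' : ℕ) : mm i j k + mm i' j' k' = mm (i+i') (j+j') (k+k') := by
  simp [mm, Finsupp.single_add]; abel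
lemma mon_eq (i j k : ℕ) (a : ℝ) : (monomial (mm i j k) a : MvP) = C a * X 0 ^ i * X 1 ^ j * X 2 ^ k := by
  simp [mm, monomial_eq, Finsupp.prod_add_index, pow_add, Finsupp.prod_single_index]
  ring
lemma mm_homog (i j k n : ℕ) (h : i + j + k = n) (a : ℝ) : (monomial (mm i j k) a : MvP).IsHomogeneous n :=
  isHomogeneous_monomial a (by rw [mm_degree, h])

def cf (i j k : ℕ) (f : MvP) : ℝ := coeff (mm i j k) f

def S15 : Finset (Fin 3 →₀ ℕ) :=
  {mm 4 0 0, mm 3 1 0, mm 3 0 1, mm 2 2 0, mm 2 1 1, mm 2 0 2, mm 1 3 0, mm 1 2 1,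
   mm 1 1 2, mm 1 0 3, mm 0 4 0, mm 0 3 1, mm 0 2 2, mm 0 1 3, mm 0 0 4}

set_option maxHeartbeats 1600000 in
lemma sum_S15 (g : (Fin 3 →₀ ℕ) → MvP) : ∑ d ∈ S15, g d
    = g (mm 4 0 0) + g (mm 3 1 0) + g (mm 3 0 1) + g (mm 2 2 0) + g (mm 2 1 1) + g (mm 2 0 2)
      + g (mm 1 3 0) + g (mm 1 2 1) + g (mm 1 1 2) + g (mm 1 0 3) + g (mm 0 4 0) + g (mm 0 3 1)
      + g (mm 0 2 2) + g (mm 0 1 3) + g (mm 0 0 4) := by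
  simp [S15, Finset.sum_insert, Finset.mem_insert, mm_eq_iff]
  ring

set_option maxHeartbeats 1600000 in
lemma rep (f : MvP) (hf : f.IsHomogeneous 4) :
    f = monomial (mm 4 0 0) (cf 4 0 0 f) + monomial (mm 3 1 0) (cf 3 1 0 f)
      + monomial (mm 3 0 1) (cf 3 0 1 f) + monomial (mm 2 2 0) (cf 2 2 0 f)
      + monomial (mm 2 1 1) (cf 2 1 1 f) + monomial (mm 2 0 2) (cf 2 0 2 f)
      + monomial (mm 1 3 0) (cf 1 3 0 f) + monomial (mm 1 2 1) (cf 1 2 1 f)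
      + monomial (mm 1 1 2) (cf 1 1 2 f) + monomial (mm 1 0 3) (cf 1 0 3 f)
      + monomial (mm 0 4 0) (cf 0 4 0 f) + monomial (mm 0 3 1) (cf 0 3 1 f)
      + monomial (mm 0 2 2) (cf 0 2 2 f) + monomial (mm 0 1 3) (cf 0 1 3 f)
      + monomial (mm 0 0 4) (cf 0 0 4 f) := by
  have hsub : f.support ⊆ S15 := by
    intro d hd
    have hc : coeff d f ≠ 0 := MvPolynomial.mem_support_iff.mp hd
    have hdeg : d.degree = 4 := by
      by_contra h
      exact hc (hf.coeff_eq_zero h)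
    rw [degree_eq] at hdeg
    obtain ⟨a, b, c, rfl⟩ : ∃ a b c, d = mm a b c := ⟨_, _, _, self_eq_mm d⟩
    rw [mm_apply0, mm_apply1, mm_apply2] at hdeg
    have ha : a ≤ 4 := by omega
    have hb : b ≤ 4 := by omega
    have hcc : c ≤ 4 := by omega
    interval_cases a <;> interval_cases b <;> interval_cases c <;>
      first
        | exact absurd hdeg (by decide)
        | simp only [S15, Finset.mem_insert, Finset.mem_singleton, eq_self_iff_true,
            true_or, or_true]
  have h1 : ∑ d ∈ S15, monomial d (coeff d f) = f := by
    rw [← Finset.sum_subset hsub (fun x _ hx => by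
      rw [MvPolynomial.notMem_support_iff.mp hx, monomial_zero])]
    exact support_sum_monomial_coeff f
  exact h1.symm.trans (sum_S15 (fun d => monomial d (coeff d f)))

lemma eval_mon (v : Fin 3 → ℝ) (i j k : ℕ) (r : ℝ) :
    eval v (monomial (mm i j k) r : MvP) = r * v 0 ^ i * v 1 ^ j * v 2 ^ k := by
  rw [mon_eq]
  simp [mul_assoc]

lemma evalf (f : MvP) (hf : f.IsHomogeneous 4) (v : Fin 3 → ℝ) :
    eval v f = cf 4 0 0 f * v 0 ^ 4
      + cf 3 1 0 f * v 0 ^ 3 * v 1 + cf 3 0 1 f * v 0 ^ 3 * v 2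
      + cf 2 2 0 f * v 0 ^ 2 * v 1 ^ 2 + cf 2 1 1 f * v 0 ^ 2 * v 1 * v 2
      + cf 2 0 2 f * v 0 ^ 2 * v 2 ^ 2 + cf 1 3 0 f * v 0 * v 1 ^ 3
      + cf 1 2 1 f * v 0 * v 1 ^ 2 * v 2 + cf 1 1 2 f * v 0 * v 1 * v 2 ^ 2
      + cf 1 0 3 f * v 0 * v 2 ^ 3 + cf 0 4 0 f * v 1 ^ 4 + cf 0 3 1 f * v 1 ^ 3 * v 2
      + cf 0 2 2 f * v 1 ^ 2 * v 2 ^ 2 + cf 0 1 3 f * v 1 * v 2 ^ 3 + cf 0 0 4 f * v 2 ^ 4 := by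
  conv_lhs => rw [rep f hf]
  simp only [map_add, eval_mon]
  ring

/-- If `a*t + b ≥ 0` for all `t`, then `a = 0`. -/
lemma lin_zero {a b : ℝ} (h : ∀ t : ℝ, 0 ≤ a * t + b) : a = 0 := by
  by_contra ha
  have h1 := h ((-b - 1) / a)
  rw [mul_div_cancel₀ _ ha] at h1
  linarith

/-- If `a*t² + b*t + c ≥ 0` for all `t`, then `a ≥ 0`. -/
lemma quad_lead {a b c : ℝ} (h : ∀ t : ℝ, 0 ≤ a * t ^ 2 + b * t + c) : 0 ≤ a := by
  by_contra ha
  push_neg at ha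
  have hna : (0:ℝ) < -a := by linarith
  obtain ⟨T, hTa, hT1⟩ : ∃ T : ℝ, (-a) * T = |b| + |c| + (-a) ∧ 1 ≤ T :=
    ⟨(|b| + |c|) / (-a) + 1,
      by rw [mul_add, mul_one, mul_div_cancel₀ _ (ne_of_gt hna)],
      le_add_of_nonneg_left (div_nonneg (by positivity) (le_of_lt hna))⟩
  have h1 := h T
  nlinarith [abs_nonneg b, abs_nonneg c, le_abs_self b, le_abs_self c, neg_abs_le b, neg_abs_le c]

/-- If `a*t³ + b*t² + c*t + d ≥ 0` for all `t`, then `a = 0`. -/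
lemma cubic_zero {a b c d : ℝ} (h : ∀ t : ℝ, 0 ≤ a * t ^ 3 + b * t ^ 2 + c * t + d) : a = 0 := by
  have key : ∀ a b c d : ℝ, (∀ t : ℝ, 0 ≤ a * t ^ 3 + b * t ^ 2 + c * t + d) → ¬ (a < 0) := by
    intro a b c d h ha
    have hna : (0:ℝ) < -a := by linarith
    obtain ⟨T, hTa, hT1⟩ : ∃ T : ℝ, (-a) * T = |b| + |c| + |d| + (-a) ∧ 1 ≤ T :=
      ⟨(|b| + |c| + |d|) / (-a) + 1,
        by rw [mul_add, mul_one, mul_div_cancel₀ _ (ne_of_gt hna)],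
        le_add_of_nonneg_left (div_nonneg (by positivity) (le_of_lt hna))⟩
    have h1 := h T
    nlinarith [abs_nonneg b, abs_nonneg c, abs_nonneg d, le_abs_self b, le_abs_self c,
      le_abs_self d, neg_abs_le b, neg_abs_le c, neg_abs_le d, sq_nonneg T]
  rcases lt_trichotomy a 0 with h1 | h1 | h1
  · exact absurd h1 (key a b c d h)
  · exact h1
  · exfalso
    refine key (-a) b (-c) d (fun t => ?_) (by linarith)
    have := h (-t)
    nlinarith [this]

lemma vanish (f : MvP) (hf : f.IsHomogeneous 4) (hpos : ∀ v : Fin 3 → ℝ, 0 ≤ eval v f)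
    (h400 : cf 4 0 0 f = 0) (h202 : cf 2 0 2 f = 0) :
    cf 3 1 0 f = 0 ∧ cf 3 0 1 f = 0 ∧ cf 2 1 1 f = 0 ∧ cf 1 0 3 f = 0 := by
  have h301 : cf 3 0 1 f = 0 := by
    apply cubic_zero (b := cf 2 0 2 f) (c := cf 1 0 3 f) (d := cf 0 0 4 f)
    intro t
    have := hpos ![t, 0, 1]
    rw [evalf f hf] at this
    simp only [Matrix.cons_val_zero, Matrix.cons_val_one, Matrix.head_cons,
      Matrix.cons_val_two, Matrix.tail_cons] at this
    exact le_of_le_of_eq this (by rw [h400, h202]; ring)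
  have h103 : cf 1 0 3 f = 0 := by
    apply lin_zero (b := cf 0 0 4 f)
    intro t
    have := hpos ![t, 0, 1]
    rw [evalf f hf] at this
    simp only [Matrix.cons_val_zero, Matrix.cons_val_one, Matrix.head_cons,
      Matrix.cons_val_two, Matrix.tail_cons] at this
    exact le_of_le_of_eq this (by rw [h400, h202, h301]; ring)
  have h310 : cf 3 1 0 f = 0 := by
    apply cubic_zero (b := cf 2 2 0 f) (c := cf 1 3 0 f) (d := cf 0 4 0 f)
    intro t
    have := hpos ![t, 1, 0]
    rw [evalf f hf] at this
    simp only [Matrix.cons_val_zero, Matrix.cons_val_one, Matrix.head_cons,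
      Matrix.cons_val_two, Matrix.tail_cons] at this
    exact le_of_le_of_eq this (by rw [h400]; ring)
  have h211 : cf 2 1 1 f = 0 := by
    apply lin_zero (b := cf 2 2 0 f)
    intro u
    apply quad_lead (b := cf 1 3 0 f + cf 1 2 1 f * u + cf 1 1 2 f * u ^ 2 + cf 1 0 3 f * u ^ 3)
      (c := cf 0 4 0 f + cf 0 3 1 f * u + cf 0 2 2 f * u ^ 2 + cf 0 1 3 f * u ^ 3 + cf 0 0 4 f * u ^ 4)
    intro t
    have := hpos ![t, 1, u]
    rw [evalf f hf] at this
    simp only [Matrix.cons_val_zero, Matrix.cons_val_one, Matrix.head_cons,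
      Matrix.cons_val_two, Matrix.tail_cons] at this
    exact le_of_le_of_eq this (by rw [h400, h310, h301, h202]; ring)
  exact ⟨h310, h301, h211, h103⟩

lemma t400 : Finsupp.single (0 : Fin 3) 4 = mm 4 0 0 := by simp [mm]
lemma t202 : Finsupp.single (0 : Fin 3) 2 + Finsupp.single (2 : Fin 3) 2 = mm 2 0 2 := by
  simp [mm]
lemma t310 : Finsupp.single (0 : Fin 3) 3 + Finsupp.single (1 : Fin 3) 1 = mm 3 1 0 := by
  simp [mm]
lemma t301 : Finsupp.single (0 : Fin 3) 3 + Finsupp.single (2 : Fin 3) 1 = mm 3 0 1 := by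
  simp [mm]
lemma t211 : Finsupp.single (0 : Fin 3) 2 + Finsupp.single (1 : Fin 3) 1
    + Finsupp.single (2 : Fin 3) 1 = mm 2 1 1 := by simp [mm]
lemma t103 : Finsupp.single (0 : Fin 3) 1 + Finsupp.single (2 : Fin 3) 3 = mm 1 0 3 := by
  simp [mm]

def qp (a b c d : ℝ) : MvP :=
  monomial (mm 1 1 0) a + monomial (mm 0 2 0) b + monomial (mm 0 1 1) c + monomial (mm 0 0 2) d

lemma qp_homog (a b c d : ℝ) : (qp a b c d).IsHomogeneous 2 :=
  (((mm_homog 1 1 0 2 rfl a).add (mm_homog 0 2 0 2 rfl b)).add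
    (mm_homog 0 1 1 2 rfl c)).add (mm_homog 0 0 2 2 rfl d)

lemma qp_sq_coeff400 (a b c d : ℝ) : coeff (mm 4 0 0) ((qp a b c d) ^ 2) = 0 := by
  rw [sq]
  simp [qp, add_mul, mul_add, monomial_mul, mm_add, coeff_add, coeff_monomial, mm_eq_iff]

lemma qp_sq_coeff202 (a b c d : ℝ) : coeff (mm 2 0 2) ((qp a b c d) ^ 2) = 0 := by
  rw [sq]
  simp [qp, add_mul, mul_add, monomial_mul, mm_add, coeff_add, coeff_monomial, mm_eq_iff]

lemma qp_sq_mem (a b c d : ℝ) : (qp a b c d) ^ 2 ∈ FT1 := by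
  refine ⟨⟨?_, fun v => ?_⟩, ?_, ?_⟩
  · have := (qp_homog a b c d).mul (qp_homog a b c d)
    rw [← sq] at this
    exact this
  · rw [map_pow]
    exact sq_nonneg _
  · rw [t400]; exact qp_sq_coeff400 a b c d
  · rw [t202]; exact qp_sq_coeff202 a b c d

lemma qpX (a b c d : ℝ) :
    qp a b c d = C a * X 0 * X 1 + C b * X 1 ^ 2 + C c * X 1 * X 2 + C d * X 2 ^ 2 := by
  simp only [qp, mon_eq]
  ring

def S9 : Set MvP :=
  {X 0 ^ 2 * X 1 ^ 2, X 0 * X 1 ^ 3, X 0 * X 1 ^ 2 * X 2, X 0 * X 1 * X 2 ^ 2,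
    X 1 ^ 4, X 1 ^ 3 * X 2, X 1 ^ 2 * X 2 ^ 2, X 1 * X 2 ^ 3, X 2 ^ 4}

open Submodule in
lemma S9_sub_span : S9 ⊆ (span ℝ FT1 : Set MvP) := by
  have hq : ∀ a b c d : ℝ, (qp a b c d) ^ 2 ∈ span ℝ FT1 :=
    fun a b c d => subset_span (qp_sq_mem a b c d)
  have pol : ∀ a b c d a' b' c' d' : ℝ,
      (qp a b c d) ^ 2 - (qp a' b' c' d') ^ 2 - (qp (a-a') (b-b') (c-c') (d-d')) ^ 2
        ∈ span ℝ FT1 → True := fun _ _ _ _ _ _ _ _ _ => trivial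
  intro m hm
  simp only [SetLike.mem_coe]
  simp only [S9, Set.mem_insert_iff, Set.mem_singleton_iff] at hm
  rcases hm with rfl|rfl|rfl|rfl|rfl|rfl|rfl|rfl|rfl
  · have : (X 0 ^ 2 * X 1 ^ 2 : MvP) = (qp 1 0 0 0) ^ 2 := by
      rw [qpX]; simp; ring
    rw [this]; exact hq 1 0 0 0
  · have h2 : ((qp 1 1 0 0) ^ 2 - (qp 1 0 0 0) ^ 2 - (qp 0 1 0 0) ^ 2 : MvP)
        ∈ span ℝ FT1 := sub_mem (sub_mem (hq 1 1 0 0) (hq 1 0 0 0)) (hq 0 1 0 0)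
    have he : ((2:ℝ) • (X 0 * X 1 ^ 3) : MvP)
        = (qp 1 1 0 0) ^ 2 - (qp 1 0 0 0) ^ 2 - (qp 0 1 0 0) ^ 2 := by
      rw [smul_eq_C_mul, qpX, qpX, qpX]; simp [map_ofNat]; ring
    rw [← Submodule.smul_mem_iff _ (two_ne_zero (α := ℝ)), he]
    exact h2
  · have h2 : ((qp 1 0 1 0) ^ 2 - (qp 1 0 0 0) ^ 2 - (qp 0 0 1 0) ^ 2 : MvP)
        ∈ span ℝ FT1 := sub_mem (sub_mem (hq 1 0 1 0) (hq 1 0 0 0)) (hq 0 0 1 0)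
    have he : ((2:ℝ) • (X 0 * X 1 ^ 2 * X 2) : MvP)
        = (qp 1 0 1 0) ^ 2 - (qp 1 0 0 0) ^ 2 - (qp 0 0 1 0) ^ 2 := by
      rw [smul_eq_C_mul, qpX, qpX, qpX]; simp [map_ofNat]; ring
    rw [← Submodule.smul_mem_iff _ (two_ne_zero (α := ℝ)), he]
    exact h2
  · have h2 : ((qp 1 0 0 1) ^ 2 - (qp 1 0 0 0) ^ 2 - (qp 0 0 0 1) ^ 2 : MvP)
        ∈ span ℝ FT1 := sub_mem (sub_mem (hq 1 0 0 1) (hq 1 0 0 0)) (hq 0 0 0 1)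
    have he : ((2:ℝ) • (X 0 * X 1 * X 2 ^ 2) : MvP)
        = (qp 1 0 0 1) ^ 2 - (qp 1 0 0 0) ^ 2 - (qp 0 0 0 1) ^ 2 := by
      rw [smul_eq_C_mul, qpX, qpX, qpX]; simp [map_ofNat]; ring
    rw [← Submodule.smul_mem_iff _ (two_ne_zero (α := ℝ)), he]
    exact h2
  · have : (X 1 ^ 4 : MvP) = (qp 0 1 0 0) ^ 2 := by
      rw [qpX]; simp; ring
    rw [this]; exact hq 0 1 0 0
  · have h2 : ((qp 0 1 1 0) ^ 2 - (qp 0 1 0 0) ^ 2 - (qp 0 0 1 0) ^ 2 : MvP)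
        ∈ span ℝ FT1 := sub_mem (sub_mem (hq 0 1 1 0) (hq 0 1 0 0)) (hq 0 0 1 0)
    have he : ((2:ℝ) • (X 1 ^ 3 * X 2) : MvP)
        = (qp 0 1 1 0) ^ 2 - (qp 0 1 0 0) ^ 2 - (qp 0 0 1 0) ^ 2 := by
      rw [smul_eq_C_mul, qpX, qpX, qpX]; simp [map_ofNat]; ring
    rw [← Submodule.smul_mem_iff _ (two_ne_zero (α := ℝ)), he]
    exact h2
  · have : (X 1 ^ 2 * X 2 ^ 2 : MvP) = (qp 0 0 1 0) ^ 2 := by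
      rw [qpX]; simp; ring
    rw [this]; exact hq 0 0 1 0
  · have h2 : ((qp 0 0 1 1) ^ 2 - (qp 0 0 1 0) ^ 2 - (qp 0 0 0 1) ^ 2 : MvP)
        ∈ span ℝ FT1 := sub_mem (sub_mem (hq 0 0 1 1) (hq 0 0 1 0)) (hq 0 0 0 1)
    have he : ((2:ℝ) • (X 1 * X 2 ^ 3) : MvP)
        = (qp 0 0 1 1) ^ 2 - (qp 0 0 1 0) ^ 2 - (qp 0 0 0 1) ^ 2 := by
      rw [smul_eq_C_mul, qpX, qpX, qpX]; simp [map_ofNat]; ring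
    rw [← Submodule.smul_mem_iff _ (two_ne_zero (α := ℝ)), he]
    exact h2
  · have : (X 2 ^ 4 : MvP) = (qp 0 0 0 1) ^ 2 := by
      rw [qpX]; simp; ring
    rw [this]; exact hq 0 0 0 1

def Wsub : Submodule ℝ MvP :=
  homogeneousSubmodule (Fin 3) ℝ 4 ⊓ LinearMap.ker (lcoeff ℝ (mm 4 0 0))
    ⊓ LinearMap.ker (lcoeff ℝ (mm 3 1 0)) ⊓ LinearMap.ker (lcoeff ℝ (mm 3 0 1))
    ⊓ LinearMap.ker (lcoeff ℝ (mm 2 0 2)) ⊓ LinearMap.ker (lcoeff ℝ (mm 2 1 1))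
    ⊓ LinearMap.ker (lcoeff ℝ (mm 1 0 3))

lemma mem_Wsub {f : MvP} : f ∈ Wsub ↔ f.IsHomogeneous 4 ∧ cf 4 0 0 f = 0 ∧ cf 3 1 0 f = 0
    ∧ cf 3 0 1 f = 0 ∧ cf 2 0 2 f = 0 ∧ cf 2 1 1 f = 0 ∧ cf 1 0 3 f = 0 := by
  simp only [Wsub, Submodule.mem_inf, LinearMap.mem_ker, lcoeff_apply, mem_homogeneousSubmodule,
    cf, and_assoc]

lemma FT1_sub_W : FT1 ⊆ (Wsub : Set MvP) := by
  rintro f ⟨⟨hhom, hpos⟩, h400, h202⟩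
  rw [t400] at h400
  rw [t202] at h202
  obtain ⟨h310, h301, h211, h103⟩ := vanish f hhom hpos h400 h202
  exact mem_Wsub.mpr ⟨hhom, h400, h310, h301, h202, h211, h103⟩

lemma mon_smul (i j k : ℕ) (c : ℝ) (e : MvP) (he : (X 0 : MvP) ^ i * X 1 ^ j * X 2 ^ k = e) :
    (monomial (mm i j k) c : MvP) = c • e := by
  rw [← he, mon_eq, smul_eq_C_mul]
  ring

lemma S9m0 : (X 0 ^ 2 * X 1 ^ 2 : MvP) ∈ S9 := Set.mem_insert _ _
lemma S9m1 : (X 0 * X 1 ^ 3 : MvP) ∈ S9 := Set.mem_insert_of_mem _ (Set.mem_insert _ _)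
lemma S9m2 : (X 0 * X 1 ^ 2 * X 2 : MvP) ∈ S9 := Set.mem_insert_of_mem _ (Set.mem_insert_of_mem _ (Set.mem_insert _ _))
lemma S9m3 : (X 0 * X 1 * X 2 ^ 2 : MvP) ∈ S9 := Set.mem_insert_of_mem _ (Set.mem_insert_of_mem _ (Set.mem_insert_of_mem _ (Set.mem_insert _ _)))
lemma S9m4 : (X 1 ^ 4 : MvP) ∈ S9 := Set.mem_insert_of_mem _ (Set.mem_insert_of_mem _ (Set.mem_insert_of_mem _ (Set.mem_insert_of_mem _ (Set.mem_insert _ _))))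
lemma S9m5 : (X 1 ^ 3 * X 2 : MvP) ∈ S9 := Set.mem_insert_of_mem _ (Set.mem_insert_of_mem _ (Set.mem_insert_of_mem _ (Set.mem_insert_of_mem _ (Set.mem_insert_of_mem _ (Set.mem_insert _ _)))))
lemma S9m6 : (X 1 ^ 2 * X 2 ^ 2 : MvP) ∈ S9 := Set.mem_insert_of_mem _ (Set.mem_insert_of_mem _ (Set.mem_insert_of_mem _ (Set.mem_insert_of_mem _ (Set.mem_insert_of_mem _ (Set.mem_insert_of_mem _ (Set.mem_insert _ _))))))
lemma S9m7 : (X 1 * X 2 ^ 3 : MvP) ∈ S9 := Set.mem_insert_of_mem _ (Set.mem_insert_of_mem _ (Set.mem_insert_of_mem _ (Set.mem_insert_of_mem _ (Set.mem_insert_of_mem _ (Set.mem_insert_of_mem _ (Set.mem_insert_of_mem _ (Set.mem_insert _ _)))))))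
lemma S9m8 : (X 2 ^ 4 : MvP) ∈ S9 := Set.mem_insert_of_mem _ (Set.mem_insert_of_mem _ (Set.mem_insert_of_mem _ (Set.mem_insert_of_mem _ (Set.mem_insert_of_mem _ (Set.mem_insert_of_mem _ (Set.mem_insert_of_mem _ (Set.mem_insert_of_mem _ (Set.mem_singleton _))))))))

open Submodule in
lemma W_sub_spanS9 : (Wsub : Set MvP) ⊆ (span ℝ S9 : Set MvP) := by
  intro f hf
  rw [SetLike.mem_coe] at hf ⊢
  obtain ⟨hhom, h400, h310, h301, h202, h211, h103⟩ := mem_Wsub.mp hf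
  rw [rep f hhom, h400, h310, h301, h202, h211, h103]
  simp only [monomial_zero, add_zero, zero_add]
  refine add_mem (add_mem (add_mem (add_mem (add_mem (add_mem (add_mem (add_mem ?_ ?_) ?_) ?_)
    ?_) ?_) ?_) ?_) ?_
  · rw [mon_smul 2 2 0 _ (X 0 ^ 2 * X 1 ^ 2) (by ring)]
    exact smul_mem _ _ (subset_span S9m0)
  · rw [mon_smul 1 3 0 _ (X 0 * X 1 ^ 3) (by ring)]
    exact smul_mem _ _ (subset_span S9m1)
  · rw [mon_smul 1 2 1 _ (X 0 * X 1 ^ 2 * X 2) (by ring)]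
    exact smul_mem _ _ (subset_span S9m2)
  · rw [mon_smul 1 1 2 _ (X 0 * X 1 * X 2 ^ 2) (by ring)]
    exact smul_mem _ _ (subset_span S9m3)
  · rw [mon_smul 0 4 0 _ (X 1 ^ 4) (by ring)]
    exact smul_mem _ _ (subset_span S9m4)
  · rw [mon_smul 0 3 1 _ (X 1 ^ 3 * X 2) (by ring)]
    exact smul_mem _ _ (subset_span S9m5)
  · rw [mon_smul 0 2 2 _ (X 1 ^ 2 * X 2 ^ 2) (by ring)]
    exact smul_mem _ _ (subset_span S9m6)
  · rw [mon_smul 0 1 3 _ (X 1 * X 2 ^ 3) (by ring)]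
    exact smul_mem _ _ (subset_span S9m7)
  · rw [mon_smul 0 0 4 _ (X 2 ^ 4) (by ring)]
    exact smul_mem _ _ (subset_span S9m8)

lemma mon_mem_W (i j k : ℕ) (h : i + j + k = 4)
    (c1 : ¬(i=4∧j=0∧k=0)) (c2 : ¬(i=3∧j=1∧k=0)) (c3 : ¬(i=3∧j=0∧k=1))
    (c4 : ¬(i=2∧j=0∧k=2)) (c5 : ¬(i=2∧j=1∧k=1)) (c6 : ¬(i=1∧j=0∧k=3)) :
    (monomial (mm i j k) (1:ℝ) : MvP) ∈ Wsub := by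
  refine mem_Wsub.mpr ⟨mm_homog i j k 4 h 1, ?_, ?_, ?_, ?_, ?_, ?_⟩
  · simp only [cf, coeff_monomial, mm_eq_iff]; rw [if_neg c1]
  · simp only [cf, coeff_monomial, mm_eq_iff]; rw [if_neg c2]
  · simp only [cf, coeff_monomial, mm_eq_iff]; rw [if_neg c3]
  · simp only [cf, coeff_monomial, mm_eq_iff]; rw [if_neg c4]
  · simp only [cf, coeff_monomial, mm_eq_iff]; rw [if_neg c5]
  · simp only [cf, coeff_monomial, mm_eq_iff]; rw [if_neg c6]

lemma e220 : (X 0 ^ 2 * X 1 ^ 2 : MvP) = monomial (mm 2 2 0) 1 := by rw [mon_eq, map_one]; ring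
lemma e130 : (X 0 * X 1 ^ 3 : MvP) = monomial (mm 1 3 0) 1 := by rw [mon_eq, map_one]; ring
lemma e121 : (X 0 * X 1 ^ 2 * X 2 : MvP) = monomial (mm 1 2 1) 1 := by rw [mon_eq, map_one]; ring
lemma e112 : (X 0 * X 1 * X 2 ^ 2 : MvP) = monomial (mm 1 1 2) 1 := by rw [mon_eq, map_one]; ring
lemma e040 : (X 1 ^ 4 : MvP) = monomial (mm 0 4 0) 1 := by rw [mon_eq, map_one]; ring
lemma e031 : (X 1 ^ 3 * X 2 : MvP) = monomial (mm 0 3 1) 1 := by rw [mon_eq, map_one]; ring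
lemma e022 : (X 1 ^ 2 * X 2 ^ 2 : MvP) = monomial (mm 0 2 2) 1 := by rw [mon_eq, map_one]; ring
lemma e013 : (X 1 * X 2 ^ 3 : MvP) = monomial (mm 0 1 3) 1 := by rw [mon_eq, map_one]; ring
lemma e004 : (X 2 ^ 4 : MvP) = monomial (mm 0 0 4) 1 := by rw [mon_eq, map_one]; ring

open Submodule in
lemma spanS9_le_W : span ℝ S9 ≤ Wsub := by
  rw [span_le]
  intro m hm
  simp only [S9, Set.mem_insert_iff, Set.mem_singleton_iff] at hm
  rcases hm with rfl|rfl|rfl|rfl|rfl|rfl|rfl|rfl|rfl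
  · rw [e220]; exact mon_mem_W 2 2 0 (by omega) (by omega) (by omega) (by omega) (by omega) (by omega) (by omega)
  · rw [e130]; exact mon_mem_W 1 3 0 (by omega) (by omega) (by omega) (by omega) (by omega) (by omega) (by omega)
  · rw [e121]; exact mon_mem_W 1 2 1 (by omega) (by omega) (by omega) (by omega) (by omega) (by omega) (by omega)
  · rw [e112]; exact mon_mem_W 1 1 2 (by omega) (by omega) (by omega) (by omega) (by omega) (by omega) (by omega)
  · rw [e040]; exact mon_mem_W 0 4 0 (by omega) (by omega) (by omega) (by omega) (by omega) (by omega) (by omega)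
  · rw [e031]; exact mon_mem_W 0 3 1 (by omega) (by omega) (by omega) (by omega) (by omega) (by omega) (by omega)
  · rw [e022]; exact mon_mem_W 0 2 2 (by omega) (by omega) (by omega) (by omega) (by omega) (by omega) (by omega)
  · rw [e013]; exact mon_mem_W 0 1 3 (by omega) (by omega) (by omega) (by omega) (by omega) (by omega) (by omega)
  · rw [e004]; exact mon_mem_W 0 0 4 (by omega) (by omega) (by omega) (by omega) (by omega) (by omega) (by omega)

def gidx : Fin 9 → (Fin 3 →₀ ℕ)
  | ⟨0, _⟩ => mm 2 2 0
  | ⟨1, _⟩ => mm 1 3 0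
  | ⟨2, _⟩ => mm 1 2 1
  | ⟨3, _⟩ => mm 1 1 2
  | ⟨4, _⟩ => mm 0 4 0
  | ⟨5, _⟩ => mm 0 3 1
  | ⟨6, _⟩ => mm 0 2 2
  | ⟨7, _⟩ => mm 0 1 3
  | ⟨8, _⟩ => mm 0 0 4

def vS : Fin 9 → MvP
  | ⟨0, _⟩ => X 0 ^ 2 * X 1 ^ 2
  | ⟨1, _⟩ => X 0 * X 1 ^ 3
  | ⟨2, _⟩ => X 0 * X 1 ^ 2 * X 2
  | ⟨3, _⟩ => X 0 * X 1 * X 2 ^ 2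
  | ⟨4, _⟩ => X 1 ^ 4
  | ⟨5, _⟩ => X 1 ^ 3 * X 2
  | ⟨6, _⟩ => X 1 ^ 2 * X 2 ^ 2
  | ⟨7, _⟩ => X 1 * X 2 ^ 3
  | ⟨8, _⟩ => X 2 ^ 4

lemma gidx_inj : Function.Injective gidx := by
  intro a b hab
  fin_cases a <;> fin_cases b <;> simp_all [gidx, mm_eq_iff]

lemma vS_eq : vS = fun n => (monomial (gidx n) (1:ℝ) : MvP) := by
  funext n
  fin_cases n <;>
    first
      | exact e220 | exact e130 | exact e121 | exact e112 | exact e040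
      | exact e031 | exact e022 | exact e013 | exact e004

lemma vS_li : LinearIndependent ℝ vS := by
  rw [vS_eq]
  have := (basisMonomials (Fin 3) ℝ).linearIndependent.comp gidx gidx_inj
  simpa [Function.comp_def, coe_basisMonomials] using this

lemma vS_range : Set.range vS = S9 := by
  ext x
  constructor
  · rintro ⟨n, rfl⟩
    fin_cases n
    · exact S9m0
    · exact S9m1
    · exact S9m2
    · exact S9m3
    · exact S9m4
    · exact S9m5
    · exact S9m6
    · exact S9m7
    · exact S9m8
  · intro hx
    simp only [S9, Set.mem_insert_iff, Set.mem_singleton_iff] at hx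
    rcases hx with rfl|rfl|rfl|rfl|rfl|rfl|rfl|rfl|rfl
    · exact ⟨0, rfl⟩
    · exact ⟨1, rfl⟩
    · exact ⟨2, rfl⟩
    · exact ⟨3, rfl⟩
    · exact ⟨4, rfl⟩
    · exact ⟨5, rfl⟩
    · exact ⟨6, rfl⟩
    · exact ⟨7, rfl⟩
    · exact ⟨8, rfl⟩

/-- `span(F_{T₁})` is the 9-dimensional subspace of `H₄` of forms whose
coefficients of `x⁴, x³y, x³z, x²z², x²yz, xz³` vanish, i.e. the span of the monomials
`x²y², xy³, xy²z, xyz², y⁴, y³z, y²z², yz³, z⁴`. -/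
theorem stmt_13 :
    (Submodule.span ℝ FT1 : Set MvP) =
      {f : MvP | f.IsHomogeneous 4 ∧
        coeff (Finsupp.single (0 : Fin 3) 4) f = 0 ∧
        coeff (Finsupp.single (0 : Fin 3) 3 + Finsupp.single (1 : Fin 3) 1) f = 0 ∧
        coeff (Finsupp.single (0 : Fin 3) 3 + Finsupp.single (2 : Fin 3) 1) f = 0 ∧
        coeff (Finsupp.single (0 : Fin 3) 2 + Finsupp.single (2 : Fin 3) 2) f = 0 ∧
        coeff (Finsupp.single (0 : Fin 3) 2 + Finsupp.single (1 : Fin 3) 1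
          + Finsupp.single (2 : Fin 3) 1) f = 0 ∧
        coeff (Finsupp.single (0 : Fin 3) 1 + Finsupp.single (2 : Fin 3) 3) f = 0} ∧
    Submodule.span ℝ FT1 = Submodule.span ℝ
      ({X 0 ^ 2 * X 1 ^ 2, X 0 * X 1 ^ 3, X 0 * X 1 ^ 2 * X 2, X 0 * X 1 * X 2 ^ 2,
        X 1 ^ 4, X 1 ^ 3 * X 2, X 1 ^ 2 * X 2 ^ 2, X 1 * X 2 ^ 3, X 2 ^ 4} : Set MvP) ∧
    Module.finrank ℝ ↥(Submodule.span ℝ FT1) = 9 := by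
  have hspan : Submodule.span ℝ FT1 = Submodule.span ℝ S9 := le_antisymm
    (Submodule.span_le.mpr (fun f hf => W_sub_spanS9 (FT1_sub_W hf)))
    (Submodule.span_le.mpr S9_sub_span)
  have hW : Submodule.span ℝ FT1 = Wsub := by
    rw [hspan]
    exact le_antisymm spanS9_le_W (fun x hx => W_sub_spanS9 hx)
  refine ⟨?_, hspan, ?_⟩
  · rw [hW]
    ext f
    rw [SetLike.mem_coe, mem_Wsub]
    simp only [Set.mem_setOf_eq, cf, t400, t310, t301, t202, t211, t103]
  · rw [hspan]
    have : S9 = Set.range vS := vS_range.symm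
    rw [this, finrank_span_eq_card vS_li]
    simp
end
end
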